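/- Let q be a prime power and A ⊆ F_q with |A+A| = m₁ and |A·A| = m₂. Then |A|³ ≤ C(q⁻¹ m₁² m₂ |A| + q^{1/2} m₁ m₂) for some absolute constant C. -/

import Mathlib

open Finset Pointwise Complex
open scoped ComplexConjugate

variable {F : Type} [Field F] [Fintype F] [DecidableEq F]

private lemma sum_mulShift_zero (ψ : AddChar F ℂ) (hψ : ψ ≠ 0) {d : F} (hd : d ≠ 0) :
    ∑ s : F, ψ (d * s) = 0 := by
  have h1 : ψ ≠ 1 := hψ
  have h2 : ψ.mulShift d ≠ 1 := AddChar.IsPrimitive.of_ne_one h1 hd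
  have h3 : ψ.mulShift d ≠ 0 := h2
  have := AddChar.sum_eq_zero_iff_ne_zero.2 h3
  simpa [AddChar.mulShift_apply] using this

private lemma sum_char_diag (C : Finset F) :
    ∑ ψ : AddChar F ℂ, (∑ c ∈ C, ψ c) * conj (∑ c ∈ C, ψ c)
      = (Fintype.card F : ℂ) * C.card := by
  have key : ∀ a : F, ∑ ψ : AddChar F ℂ, ψ a = if a = 0 then (Fintype.card F : ℂ) else 0 :=
    AddChar.sum_apply_eq_ite
  calc ∑ ψ : AddChar F ℂ, (∑ c ∈ C, ψ c) * conj (∑ c ∈ C, ψ c)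
      = ∑ ψ : AddChar F ℂ, ∑ c ∈ C, ∑ c' ∈ C, ψ (c - c') := by
        refine Finset.sum_congr rfl fun ψ _ => ?_
        rw [map_sum, Finset.sum_mul_sum]
        refine Finset.sum_congr rfl fun c _ => Finset.sum_congr rfl fun c' _ => ?_
        rw [← AddChar.map_neg_eq_conj, ← AddChar.map_add_eq_mul, sub_eq_add_neg]
    _ = ∑ c ∈ C, ∑ c' ∈ C, ∑ ψ : AddChar F ℂ, ψ (c - c') := by
        rw [Finset.sum_comm]
        exact Finset.sum_congr rfl fun c _ => Finset.sum_comm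
    _ = ∑ c ∈ C, ∑ c' ∈ C, if c = c' then (Fintype.card F : ℂ) else 0 := by
        simp only [key, sub_eq_zero]
    _ = (Fintype.card F : ℂ) * C.card := by
        simp [Finset.sum_ite_eq, mul_comm]

private lemma char_diag_real (ψ : AddChar F ℂ) (hψ : ψ ≠ 0) (X : Finset F) :
    ∑ s : F, Complex.normSq (∑ x ∈ X, ψ (s * x))
      = (Fintype.card F : ℝ) * X.card := by
  have hC : ∑ s : F, ((Complex.normSq (∑ x ∈ X, ψ (s * x)) : ℝ) : ℂ)
      = ((Fintype.card F : ℝ) * X.card : ℝ) := by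
    push_cast
    calc ∑ s : F, ((Complex.normSq (∑ x ∈ X, ψ (s * x)) : ℝ) : ℂ)
        = ∑ s : F, (∑ x ∈ X, ψ (s * x)) * conj (∑ x ∈ X, ψ (s * x)) := by
          refine Finset.sum_congr rfl fun s _ => ?_
          rw [Complex.mul_conj]
      _ = ∑ s : F, ∑ x ∈ X, ∑ x' ∈ X, ψ ((x - x') * s) := by
          refine Finset.sum_congr rfl fun s _ => ?_
          rw [map_sum, Finset.sum_mul_sum]
          refine Finset.sum_congr rfl fun x _ => Finset.sum_congr rfl fun x' _ => ?_
          rw [← AddChar.map_neg_eq_conj, ← AddChar.map_add_eq_mul]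
          ring_nf
      _ = ∑ x ∈ X, ∑ x' ∈ X, ∑ s : F, ψ ((x - x') * s) := by
          rw [Finset.sum_comm]
          exact Finset.sum_congr rfl fun x _ => Finset.sum_comm
      _ = ∑ x ∈ X, ∑ x' ∈ X, if x = x' then (Fintype.card F : ℂ) else 0 := by
          refine Finset.sum_congr rfl fun x _ => Finset.sum_congr rfl fun x' _ => ?_
          by_cases h : x = x'
          · simp [h, AddChar.map_zero_eq_one]
          · rw [if_neg h, sum_mulShift_zero ψ hψ (sub_ne_zero.2 h)]
      _ = (Fintype.card F : ℂ) * X.card := by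
          simp [Finset.sum_ite_eq, mul_comm]
  exact_mod_cast hC

private lemma bilinear_bound (ψ : AddChar F ℂ) (hψ : ψ ≠ 0) (S X : Finset F) :
    ‖(∑ s ∈ S, ∑ x ∈ X, ψ (s * x))‖
      ≤ Real.sqrt ((S.card : ℝ) * ((Fintype.card F : ℝ) * X.card)) := by
  have h1 : ‖(∑ s ∈ S, ∑ x ∈ X, ψ (s * x))‖
      ≤ ∑ s ∈ S, ‖(∑ x ∈ X, ψ (s * x))‖ := by
    exact norm_sum_le _ _
  have h2 : (∑ s ∈ S, ‖(∑ x ∈ X, ψ (s * x))‖) ^ 2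
      ≤ (S.card : ℝ) * ∑ s ∈ S, ‖(∑ x ∈ X, ψ (s * x))‖ ^ 2 :=
    sq_sum_le_card_mul_sum_sq
  have h3 : ∑ s ∈ S, ‖(∑ x ∈ X, ψ (s * x))‖ ^ 2
      ≤ (Fintype.card F : ℝ) * X.card := by
    rw [← char_diag_real ψ hψ X]
    have : ∀ s : F, ‖(∑ x ∈ X, ψ (s * x))‖ ^ 2
        = Complex.normSq (∑ x ∈ X, ψ (s * x)) := fun s => Complex.sq_norm _
    simp only [this]
    exact Finset.sum_le_univ_sum_of_nonneg fun s => Complex.normSq_nonneg _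
  have h4 : ‖(∑ s ∈ S, ∑ x ∈ X, ψ (s * x))‖ ^ 2
      ≤ (S.card : ℝ) * ((Fintype.card F : ℝ) * X.card) := by
    calc ‖(∑ s ∈ S, ∑ x ∈ X, ψ (s * x))‖ ^ 2
        ≤ (∑ s ∈ S, ‖(∑ x ∈ X, ψ (s * x))‖) ^ 2 := by
          apply pow_le_pow_left₀ (norm_nonneg _) h1
      _ ≤ (S.card : ℝ) * ∑ s ∈ S, ‖(∑ x ∈ X, ψ (s * x))‖ ^ 2 := h2
      _ ≤ (S.card : ℝ) * ((Fintype.card F : ℝ) * X.card) := by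
          exact mul_le_mul_of_nonneg_left h3 (Nat.cast_nonneg _)
  have := Real.sqrt_le_sqrt h4
  rwa [Real.sqrt_sq (norm_nonneg _)] at this

private lemma fourier_identity (S X C U : Finset F) :
    (Fintype.card F : ℂ) *
        ((((S ×ˢ X) ×ˢ C ×ˢ U).filter fun p => p.1.1 * p.1.2 + p.2.1 = p.2.2).card : ℂ)
      = ∑ ψ : AddChar F ℂ,
          (∑ s ∈ S, ∑ x ∈ X, ψ (s * x)) * (∑ c ∈ C, ψ c) * (∑ u ∈ U, ψ (-u)) := by
  have step1 : ∀ ψ : AddChar F ℂ,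
      (∑ s ∈ S, ∑ x ∈ X, ψ (s * x)) * (∑ c ∈ C, ψ c) * (∑ u ∈ U, ψ (-u))
        = ∑ p ∈ (S ×ˢ X) ×ˢ C ×ˢ U, ψ (p.1.1 * p.1.2 + p.2.1 + -p.2.2) := by
    intro ψ
    simp only [Finset.sum_product]
    simp only [AddChar.map_add_eq_mul]
    simp only [Finset.sum_mul, Finset.mul_sum]
    conv_lhs => rw [Finset.sum_comm]
    conv_lhs => enter [2, c]; rw [Finset.sum_comm]
    conv_lhs => rw [Finset.sum_comm]
    conv_lhs => enter [2, s, 2, c]; rw [Finset.sum_comm]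
    conv_lhs => enter [2, s]; rw [Finset.sum_comm]
  simp only [step1]
  rw [Finset.sum_comm]
  have step2 : ∀ p : (F × F) × F × F,
      ∑ ψ : AddChar F ℂ, ψ (p.1.1 * p.1.2 + p.2.1 + -p.2.2)
        = if p.1.1 * p.1.2 + p.2.1 = p.2.2 then (Fintype.card F : ℂ) else 0 := by
    intro p
    rw [AddChar.sum_apply_eq_ite]
    congr 1
    simp [sub_eq_zero, add_neg_eq_zero]
  simp only [step2]
  rw [← Finset.sum_filter, Finset.sum_const]
  simp [mul_comm]

private lemma count_bound (S X C U : Finset F) :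
    ((((S ×ˢ X) ×ˢ C ×ˢ U).filter fun p => p.1.1 * p.1.2 + p.2.1 = p.2.2).card : ℝ)
      ≤ (S.card : ℝ) * X.card * C.card * U.card / Fintype.card F
        + Real.sqrt (Fintype.card F) *
          Real.sqrt ((S.card : ℝ) * X.card * C.card * U.card) := by
  set q : ℝ := (Fintype.card F : ℝ) with hq
  have hq0 : 0 < q := by
    have : 0 < Fintype.card F := Fintype.card_pos
    positivity
  set N : ℕ := (((S ×ˢ X) ×ˢ C ×ˢ U).filter fun p => p.1.1 * p.1.2 + p.2.1 = p.2.2).card with hN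
  -- abs bound from Fourier identity
  have h1 : q * (N : ℝ) ≤ ∑ ψ : AddChar F ℂ,
      ‖(∑ s ∈ S, ∑ x ∈ X, ψ (s * x))‖ * ‖(∑ c ∈ C, ψ c)‖
        * ‖(∑ u ∈ U, ψ (-u))‖ := by
    have := fourier_identity S X C U
    have habs : ‖((Fintype.card F : ℂ) * (N : ℂ))‖ = q * N := by
      rw [norm_mul, Complex.norm_natCast, Complex.norm_natCast]
    calc q * (N:ℝ) = ‖((Fintype.card F : ℂ) * (N : ℂ))‖ := habs.symm
      _ = ‖(∑ ψ : AddChar F ℂ,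
            (∑ s ∈ S, ∑ x ∈ X, ψ (s * x)) * (∑ c ∈ C, ψ c) * (∑ u ∈ U, ψ (-u)))‖ := by
          rw [this]
      _ ≤ ∑ ψ : AddChar F ℂ, ‖((∑ s ∈ S, ∑ x ∈ X, ψ (s * x)) * (∑ c ∈ C, ψ c) * (∑ u ∈ U, ψ (-u)))‖ :=
          norm_sum_le _ _
      _ = ∑ ψ : AddChar F ℂ, ‖(∑ s ∈ S, ∑ x ∈ X, ψ (s * x))‖
            * ‖(∑ c ∈ C, ψ c)‖ * ‖(∑ u ∈ U, ψ (-u))‖ := by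
          simp [map_mul]
  -- split off trivial character
  have h2 : ∑ ψ : AddChar F ℂ,
      ‖(∑ s ∈ S, ∑ x ∈ X, ψ (s * x))‖ * ‖(∑ c ∈ C, ψ c)‖
        * ‖(∑ u ∈ U, ψ (-u))‖
      = (S.card : ℝ) * X.card * C.card * U.card
        + ∑ ψ ∈ Finset.univ.erase (0 : AddChar F ℂ),
            ‖(∑ s ∈ S, ∑ x ∈ X, ψ (s * x))‖ * ‖(∑ c ∈ C, ψ c)‖
              * ‖(∑ u ∈ U, ψ (-u))‖ := by
    rw [← Finset.add_sum_erase _ _ (Finset.mem_univ (0 : AddChar F ℂ))]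
    congr 1
    simp [Finset.sum_const, Complex.norm_natCast, mul_assoc]
  -- bound the nontrivial part
  have h3 : ∑ ψ ∈ Finset.univ.erase (0 : AddChar F ℂ),
      ‖(∑ s ∈ S, ∑ x ∈ X, ψ (s * x))‖ * ‖(∑ c ∈ C, ψ c)‖
        * ‖(∑ u ∈ U, ψ (-u))‖
      ≤ Real.sqrt ((S.card : ℝ) * (q * X.card)) *
          ∑ ψ ∈ Finset.univ.erase (0 : AddChar F ℂ),
            ‖(∑ c ∈ C, ψ c)‖ * ‖(∑ u ∈ U, ψ (-u))‖ := by
    rw [Finset.mul_sum]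
    refine Finset.sum_le_sum fun ψ hψ => ?_
    have hψ0 : ψ ≠ 0 := Finset.ne_of_mem_erase hψ
    rw [mul_assoc]
    refine mul_le_mul_of_nonneg_right (bilinear_bound ψ hψ0 S X) ?_
    positivity
  have h4 : ∑ ψ ∈ Finset.univ.erase (0 : AddChar F ℂ),
      ‖(∑ c ∈ C, ψ c)‖ * ‖(∑ u ∈ U, ψ (-u))‖
      ≤ Real.sqrt (q * C.card) * Real.sqrt (q * U.card) := by
    have cs := Real.sum_mul_le_sqrt_mul_sqrt (Finset.univ.erase (0 : AddChar F ℂ))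
      (fun ψ => ‖(∑ c ∈ C, ψ c)‖) (fun ψ => ‖(∑ u ∈ U, ψ (-u))‖)
    refine cs.trans ?_
    have e1 : ∑ ψ ∈ Finset.univ.erase (0 : AddChar F ℂ), ‖(∑ c ∈ C, ψ c)‖ ^ 2
        ≤ q * C.card := by
      calc ∑ ψ ∈ Finset.univ.erase (0 : AddChar F ℂ), ‖(∑ c ∈ C, ψ c)‖ ^ 2
          ≤ ∑ ψ : AddChar F ℂ, ‖(∑ c ∈ C, ψ c)‖ ^ 2 :=
            Finset.sum_le_sum_of_subset_of_nonneg (Finset.erase_subset _ _)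
              (fun _ _ _ => by positivity)
        _ = q * C.card := by
            have := sum_char_diag (F := F) C
            have e2 : ∀ ψ : AddChar F ℂ, ‖(∑ c ∈ C, ψ c)‖ ^ 2
                = Complex.normSq (∑ c ∈ C, ψ c) := fun ψ => Complex.sq_norm _
            simp only [e2]
            have : ∑ ψ : AddChar F ℂ, ((Complex.normSq (∑ c ∈ C, ψ c) : ℝ) : ℂ)
                = ((q * C.card : ℝ) : ℂ) :=
              calc ∑ ψ : AddChar F ℂ, ((Complex.normSq (∑ c ∈ C, ψ c) : ℝ) : ℂ)
                  = ∑ ψ : AddChar F ℂ, (∑ c ∈ C, ψ c) * conj (∑ c ∈ C, ψ c) :=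
                    Finset.sum_congr rfl fun ψ _ => (Complex.mul_conj _).symm
                _ = (Fintype.card F : ℂ) * C.card := sum_char_diag C
                _ = ((q * C.card : ℝ) : ℂ) := by rw [hq]; push_cast; ring
            exact_mod_cast this
    have e1' : ∑ ψ ∈ Finset.univ.erase (0 : AddChar F ℂ), ‖(∑ u ∈ U, ψ (-u))‖ ^ 2
        ≤ q * U.card := by
      have key : ∀ ψ : AddChar F ℂ, ‖(∑ u ∈ U, ψ (-u))‖ = ‖(∑ u ∈ U, ψ u)‖ := by
        intro ψ
        have : ∑ u ∈ U, ψ (-u) = (starRingEnd ℂ) (∑ u ∈ U, ψ u) := by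
          rw [map_sum]
          exact Finset.sum_congr rfl fun u _ => AddChar.map_neg_eq_conj ψ u
        rw [this, Complex.norm_conj]
      simp only [key]
      calc ∑ ψ ∈ Finset.univ.erase (0 : AddChar F ℂ), ‖(∑ u ∈ U, ψ u)‖ ^ 2
          ≤ ∑ ψ : AddChar F ℂ, ‖(∑ u ∈ U, ψ u)‖ ^ 2 :=
            Finset.sum_le_sum_of_subset_of_nonneg (Finset.erase_subset _ _)
              (fun _ _ _ => by positivity)
        _ = q * U.card := by
            have e2 : ∀ ψ : AddChar F ℂ, ‖(∑ u ∈ U, ψ u)‖ ^ 2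
                = Complex.normSq (∑ u ∈ U, ψ u) := fun ψ => Complex.sq_norm _
            simp only [e2]
            have : ∑ ψ : AddChar F ℂ, ((Complex.normSq (∑ u ∈ U, ψ u) : ℝ) : ℂ)
                = ((q * U.card : ℝ) : ℂ) :=
              calc ∑ ψ : AddChar F ℂ, ((Complex.normSq (∑ u ∈ U, ψ u) : ℝ) : ℂ)
                  = ∑ ψ : AddChar F ℂ, (∑ u ∈ U, ψ u) * conj (∑ u ∈ U, ψ u) :=
                    Finset.sum_congr rfl fun ψ _ => (Complex.mul_conj _).symm
                _ = (Fintype.card F : ℂ) * U.card := sum_char_diag U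
                _ = ((q * U.card : ℝ) : ℂ) := by rw [hq]; push_cast; ring
            exact_mod_cast this
    exact mul_le_mul (Real.sqrt_le_sqrt e1) (Real.sqrt_le_sqrt e1')
      (Real.sqrt_nonneg _) (Real.sqrt_nonneg _)
  -- combine
  have hsqrt : Real.sqrt ((S.card : ℝ) * (q * X.card)) * (Real.sqrt (q * C.card)
      * Real.sqrt (q * U.card))
      = q * (Real.sqrt q * Real.sqrt ((S.card : ℝ) * X.card * C.card * U.card)) := by
    rw [← Real.sqrt_mul (by positivity), ← Real.sqrt_mul (by positivity),
      ← Real.sqrt_mul (by positivity)]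
    rw [show (S.card : ℝ) * (q * X.card) * (q * C.card * (q * U.card))
        = (q * q) * (q * ((S.card : ℝ) * X.card * C.card * U.card)) by ring]
    rw [Real.sqrt_mul (by positivity), Real.sqrt_mul_self hq0.le,
      Real.sqrt_mul (by positivity)]
  have main : q * (N : ℝ) ≤ (S.card : ℝ) * X.card * C.card * U.card
      + q * (Real.sqrt q * Real.sqrt ((S.card : ℝ) * X.card * C.card * U.card)) := by
    rw [← hsqrt]
    calc q * (N : ℝ) ≤ _ := h1
      _ = _ := h2
      _ ≤ (S.card : ℝ) * X.card * C.card * U.card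
          + Real.sqrt ((S.card : ℝ) * (q * X.card)) *
            ∑ ψ ∈ Finset.univ.erase (0 : AddChar F ℂ),
              ‖(∑ c ∈ C, ψ c)‖ * ‖(∑ u ∈ U, ψ (-u))‖ := by
          linarith [h3]
      _ ≤ (S.card : ℝ) * X.card * C.card * U.card
          + Real.sqrt ((S.card : ℝ) * (q * X.card)) *
            (Real.sqrt (q * C.card) * Real.sqrt (q * U.card)) := by
          have := mul_le_mul_of_nonneg_left h4 (Real.sqrt_nonneg ((S.card : ℝ) * (q * X.card)))
          linarith [this]
  have : (N : ℝ) ≤ ((S.card : ℝ) * X.card * C.card * U.card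
      + q * (Real.sqrt q * Real.sqrt ((S.card : ℝ) * X.card * C.card * U.card))) / q := by
    rw [le_div_iff₀ hq0]
    linarith [main]
  refine this.trans ?_
  rw [add_div]
  have : q * (Real.sqrt q * Real.sqrt ((S.card : ℝ) * X.card * C.card * U.card)) / q
      = Real.sqrt q * Real.sqrt ((S.card : ℝ) * X.card * C.card * U.card) := by
    field_simp
  rw [this]

private lemma lower_bound (A : Finset F) :
    A.card ^ 3 ≤ ((((A * A) ×ˢ ((A.erase 0).image (·⁻¹))) ×ˢ A ×ˢ (A + A)).filter
      fun p => p.1.1 * p.1.2 + p.2.1 = p.2.2).card + A.card ^ 2 := by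
  set X : Finset F := (A.erase 0).image (·⁻¹) with hX
  have key : (A.erase 0).card * (A.card * A.card)
      ≤ ((((A * A) ×ˢ X) ×ˢ A ×ˢ (A + A)).filter
        fun p => p.1.1 * p.1.2 + p.2.1 = p.2.2).card := by
    rw [← Finset.card_product, ← Finset.card_product]
    refine Finset.card_le_card_of_injOn
      (fun t => ((t.1 * t.2.1, t.1⁻¹), t.2.2, t.2.1 + t.2.2)) ?_ ?_
    · rintro ⟨a, b, c⟩ ht
      simp only [Finset.mem_coe, Finset.mem_product] at ht
      obtain ⟨ha, hb, hc⟩ := ht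
      have ha0 : a ≠ 0 := Finset.ne_of_mem_erase ha
      have haA : a ∈ A := Finset.mem_of_mem_erase ha
      simp only [Finset.mem_coe, Finset.mem_filter, Finset.mem_product]
      refine ⟨⟨⟨Finset.mul_mem_mul haA hb, ?_⟩, hc, Finset.add_mem_add hb hc⟩, ?_⟩
      · exact Finset.mem_image_of_mem _ ha
      · field_simp
    · rintro ⟨a₁, b₁, c₁⟩ h₁ ⟨a₂, b₂, c₂⟩ h₂ heq
      simp only [Finset.mem_coe, Finset.mem_product] at h₁ h₂
      have ha₁ : a₁ ≠ 0 := Finset.ne_of_mem_erase h₁.1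
      simp only [Prod.mk.injEq] at heq
      obtain ⟨⟨hab, hainv⟩, hc, hbc⟩ := heq
      have ha : a₁ = a₂ := inv_injective hainv
      subst ha
      have hb : b₁ = b₂ := by
        have := hab
        exact mul_left_cancel₀ ha₁ this
      simp [hb, hc]
  have h1 : A.card - 1 ≤ (A.erase 0).card := Finset.pred_card_le_card_erase
  have h2 : (A.card - 1) * (A.card * A.card) ≤ (A.erase 0).card * (A.card * A.card) :=
    Nat.mul_le_mul_right _ h1
  rcases Nat.eq_zero_or_pos A.card with h | h
  · simp [h]
  · have : A.card ^ 3 = (A.card - 1) * (A.card * A.card) + A.card ^ 2 := by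
      obtain ⟨k, hk⟩ := Nat.exists_eq_add_of_le h
      rw [hk, Nat.add_sub_cancel_left]
      ring
    omega

private lemma card_le_card_mul (A : Finset F) (hA : A.Nonempty) :
    A.card ≤ (A * A).card := by
  by_cases h : ∃ a₀ ∈ A, a₀ ≠ 0
  · obtain ⟨a₀, ha₀, ha₀0⟩ := h
    refine Finset.card_le_card_of_injOn (fun a => a * a₀)
      (fun a ha => Finset.mul_mem_mul ha ha₀) ?_
    intro a _ b _ hab
    exact mul_right_cancel₀ ha₀0 hab
  · push_neg at h
    have h0 : (0 : F) ∈ A := by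
      obtain ⟨a, ha⟩ := hA
      have := h a ha
      rwa [this] at ha
    have : A = {0} := by
      apply Finset.Subset.antisymm
      · intro a ha; simp [h a ha]
      · intro x hx
        rw [Finset.mem_singleton] at hx
        subst hx
        exact h0
    rw [this]
    simp

private lemma card_le_card_add (A : Finset F) (hA : A.Nonempty) :
    A.card ≤ (A + A).card := by
  obtain ⟨a₀, ha₀⟩ := hA
  refine Finset.card_le_card_of_injOn (fun a => a + a₀)
    (fun a ha => Finset.add_mem_add ha ha₀) ?_
  intro a _ b _ hab
  exact add_right_cancel hab

theorem sum_product_bound :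
    ∃ C : ℝ, 0 < C ∧ ∀ (F : Type) [Field F] [Fintype F] [DecidableEq F] (A : Finset F),
      (A.card : ℝ) ^ 3 ≤
        C * ((Fintype.card F : ℝ)⁻¹ * ((A + A).card : ℝ) ^ 2 * ((A * A).card : ℝ) * A.card +
          Real.sqrt (Fintype.card F) * ((A + A).card : ℝ) * ((A * A).card : ℝ)) := by
  refine ⟨3, by norm_num, ?_⟩
  intro F _ _ _ A
  rcases A.eq_empty_or_nonempty with rfl | hA
  · simp
  set X : Finset F := (A.erase 0).image (·⁻¹) with hXdef
  set a : ℝ := (A.card : ℝ) with hadef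
  set m1 : ℝ := ((A + A).card : ℝ) with hm1def
  set m2 : ℝ := ((A * A).card : ℝ) with hm2def
  set q : ℝ := (Fintype.card F : ℝ) with hqdef
  have hq1 : (1 : ℝ) ≤ q := by
    have h : 1 ≤ Fintype.card F := Fintype.card_pos
    rw [hqdef]; exact_mod_cast h
  have hq0 : (0 : ℝ) < q := lt_of_lt_of_le one_pos hq1
  have ha1 : (1 : ℝ) ≤ a := by
    have h : 1 ≤ A.card := Finset.card_pos.2 hA
    rw [hadef]; exact_mod_cast h
  have ha0 : (0 : ℝ) ≤ a := le_trans zero_le_one ha1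
  have ham1 : a ≤ m1 := by rw [hadef, hm1def]; exact_mod_cast card_le_card_add A hA
  have ham2 : a ≤ m2 := by rw [hadef, hm2def]; exact_mod_cast card_le_card_mul A hA
  have hm10 : (0 : ℝ) ≤ m1 := le_trans ha0 ham1
  have hm20 : (0 : ℝ) ≤ m2 := le_trans ha0 ham2
  have hXle : ((X.card : ℝ)) ≤ a := by
    have h1 : X.card ≤ (A.erase 0).card := Finset.card_image_le
    have h2 : (A.erase 0).card ≤ A.card := Finset.card_erase_le
    rw [hadef]; exact_mod_cast h1.trans h2
  have hX0 : (0 : ℝ) ≤ (X.card : ℝ) := Nat.cast_nonneg _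
  -- lower bound
  have hlow : a ^ 3 ≤ ((((A * A) ×ˢ X) ×ˢ A ×ˢ (A + A)).filter
      (fun p => p.1.1 * p.1.2 + p.2.1 = p.2.2)).card + a ^ 2 := by
    have := lower_bound A
    have := (Nat.cast_le (α := ℝ)).2 this
    push_cast at this
    convert this using 2 <;> push_cast <;> ring_nf
  -- upper bound
  have hup := count_bound (A * A) X A (A + A)
  have hmono : m2 * (X.card : ℝ) * a * m1 ≤ m2 * a * a * m1 := by
    have h' : m2 * (X.card : ℝ) ≤ m2 * a := mul_le_mul_of_nonneg_left hXle hm20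
    have h'' : m2 * (X.card : ℝ) * a ≤ m2 * a * a := mul_le_mul_of_nonneg_right h' ha0
    exact mul_le_mul_of_nonneg_right h'' hm10
  have hup2 : ((((A * A) ×ˢ X) ×ˢ A ×ˢ (A + A)).filter
      (fun p => p.1.1 * p.1.2 + p.2.1 = p.2.2)).card
      ≤ m2 * a * a * m1 / q + Real.sqrt q * Real.sqrt (m2 * a * a * m1) := by
    refine hup.trans ?_
    gcongr
  have hsqrtP : Real.sqrt (m2 * a * a * m1) = a * Real.sqrt (m1 * m2) := by
    rw [show m2 * a * a * m1 = a ^ 2 * (m1 * m2) by ring, Real.sqrt_mul (by positivity),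
      Real.sqrt_sq ha0]
  -- three term bounds
  have hsq : (1:ℝ) ≤ Real.sqrt q := Real.one_le_sqrt.2 hq1
  have hmm : a * a ≤ m1 * m2 := mul_le_mul ham1 ham2 ha0 hm10
  have t2a : a ^ 2 ≤ Real.sqrt q * m1 * m2 := by
    calc a ^ 2 = a * a := sq a
      _ ≤ m1 * m2 := hmm
      _ ≤ Real.sqrt q * (m1 * m2) := le_mul_of_one_le_left (by positivity) hsq
      _ = Real.sqrt q * m1 * m2 := by ring
  have t1 : m2 * a * a * m1 / q ≤ q⁻¹ * m1 ^ 2 * m2 * a := by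
    rw [div_eq_inv_mul]
    have h : m2 * a * a * m1 ≤ m1 ^ 2 * m2 * a := by
      calc m2 * a * a * m1 = m2 * a * m1 * a := by ring
        _ ≤ m2 * a * m1 * m1 :=
            mul_le_mul_of_nonneg_left ham1 (by positivity)
        _ = m1 ^ 2 * m2 * a := by ring
    calc q⁻¹ * (m2 * a * a * m1) ≤ q⁻¹ * (m1 ^ 2 * m2 * a) := by
          exact mul_le_mul_of_nonneg_left h (by positivity)
      _ = q⁻¹ * m1 ^ 2 * m2 * a := by ring
  have t3 : Real.sqrt q * (a * Real.sqrt (m1 * m2)) ≤ Real.sqrt q * m1 * m2 := by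
    have hasq : a ≤ Real.sqrt (m1 * m2) := by
      rw [show a = Real.sqrt (a ^ 2) by rw [Real.sqrt_sq ha0]]
      refine Real.sqrt_le_sqrt ?_
      rw [sq]; exact hmm
    have : a * Real.sqrt (m1 * m2) ≤ Real.sqrt (m1 * m2) * Real.sqrt (m1 * m2) :=
      mul_le_mul_of_nonneg_right hasq (Real.sqrt_nonneg _)
    rw [Real.mul_self_sqrt (by positivity)] at this
    calc Real.sqrt q * (a * Real.sqrt (m1 * m2)) ≤ Real.sqrt q * (m1 * m2) :=
          mul_le_mul_of_nonneg_left this (Real.sqrt_nonneg _)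
      _ = Real.sqrt q * m1 * m2 := by ring
  have hT1 : (0:ℝ) ≤ q⁻¹ * m1 ^ 2 * m2 * a := by positivity
  have hT2 : (0:ℝ) ≤ Real.sqrt q * m1 * m2 := by positivity
  have final : a ^ 3 ≤ 3 * (q⁻¹ * m1 ^ 2 * m2 * a + Real.sqrt q * m1 * m2) := by
    rw [hsqrtP] at hup2
    linarith [hlow, hup2, t2a, t1, t3, hT1, hT2]
  exact final
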